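/- Let D = S × C where S is cyclic of order 3 generated by s and C is cyclic of order 3^n (n ≥ 2), and let c₁ be an element of order 3 in C. Let A be an S-ring over D and T a basic set of A. If T contains elements a, b with |a| > |b| ≥ 3 (orders of elements), then the three elements a, a·c₁, a·c₁² all belong to T. -/

import Mathlib

open scoped BigOperators Pointwise Classical

noncomputable section

/-- The group-ring element `X̄ = Σ_{x∈X} x` in `ℤG`. -/
def ind {G : Type*} [Group G] (X : Finset G) : MonoidAlgebra ℤ G :=
  ∑ x ∈ X, MonoidAlgebra.single x 1

/-- The ℤ-span of the class sums of the members of `S`. -/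
def spanA {G : Type*} [Group G] (S : Finset (Finset G)) :
    Submodule ℤ (MonoidAlgebra ℤ G) :=
  Submodule.span ℤ (ind '' (S : Set (Finset G)))

/-- `S` is the partition of basic sets of an S-ring over `G`. -/
structure IsSRing {G : Type*} [Group G] (S : Finset (Finset G)) : Prop where
  cover : ∀ g : G, ∃ X ∈ S, g ∈ X
  disj : ∀ X ∈ S, ∀ Y ∈ S, X ≠ Y → Disjoint X Y
  nonempty : ∀ X ∈ S, X.Nonempty
  one_mem : ({1} : Finset G) ∈ S
  inv_mem : ∀ X ∈ S, X.image (·⁻¹) ∈ S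
  mul_closed : ∀ a ∈ spanA S, ∀ b ∈ spanA S, a * b ∈ spanA S

/-- `X` is an `A`-set: its class sum lies in the span of the basic class sums. -/
def IsASet {G : Type*} [Group G] (S : Finset (Finset G)) (X : Finset G) : Prop :=
  ind X ∈ spanA S

/-- The finset underlying a subgroup of a finite group. -/
def subgroupFinset {G : Type*} [Group G] [Fintype G] (H : Subgroup G) : Finset G :=
  Finset.univ.filter (· ∈ H)

/-- `H` is an `A`-subgroup. -/
def IsASubgroup {G : Type*} [Group G] [Fintype G] (S : Finset (Finset G))
    (H : Subgroup G) : Prop :=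
  IsASet S (subgroupFinset H)

/-- The radical `rad(X) = {g : gX = Xg = X}` as a subgroup. -/
def radSubgroup {G : Type*} [Group G] (X : Finset G) : Subgroup G where
  carrier := {g : G | X.image (g * ·) = X ∧ X.image (· * g) = X}
  one_mem' := by
    constructor <;> · simp only [one_mul, mul_one]; exact Finset.image_id
  mul_mem' := by
    rintro a b ⟨ha1, ha2⟩ ⟨hb1, hb2⟩
    constructor
    · have : X.image (a * b * ·) = (X.image (b * ·)).image (a * ·) := by
        rw [Finset.image_image]
        exact Finset.image_congr (fun x _ => by simp [mul_assoc])
      rw [this, hb1, ha1]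
    · have : X.image (· * (a * b)) = (X.image (· * a)).image (· * b) := by
        rw [Finset.image_image]
        exact Finset.image_congr (fun x _ => by simp [mul_assoc])
      rw [this, ha2, hb2]
  inv_mem' := by
    rintro a ⟨ha1, ha2⟩
    constructor
    · have := congrArg (Finset.image (a⁻¹ * ·)) ha1
      rw [Finset.image_image] at this
      have h2 : X.image ((a⁻¹ * ·) ∘ (a * ·)) = X := by
        rw [show ((a⁻¹ * ·) ∘ (a * ·)) = id by funext x; simp, Finset.image_id]
      rw [← this, h2]
    · have := congrArg (Finset.image (· * a⁻¹)) ha2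
      rw [Finset.image_image] at this
      have h2 : X.image ((· * a⁻¹) ∘ (· * a)) = X := by
        rw [show ((· * a⁻¹) ∘ (· * a)) = id by funext x; simp, Finset.image_id]
      rw [← this, h2]

end

instance nePow (a k : ℕ) [NeZero a] : NeZero (a ^ k) := ⟨pow_ne_zero k (NeZero.ne a)⟩

/-- The group `D = ℤ₃ × ℤ_{3^n}` (written multiplicatively). -/
abbrev Dgrp (n : ℕ) := Multiplicative (ZMod 3) × Multiplicative (ZMod (3 ^ n))

noncomputable section
section Aux
variable {G : Type*} [CommGroup G]

lemma ind_apply (X : Finset G) (g : G) : (ind X).coeff g = if g ∈ X then 1 else 0 := by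
  rw [ind, MonoidAlgebra.coeff_sum, Finset.sum_apply']
  simp [MonoidAlgebra.coeff_single, Finsupp.single_apply, Finset.sum_ite_eq]

/-- Coefficients of elements of the S-ring are constant on basic sets. -/
lemma coeff_const {S : Finset (Finset G)} (hS : IsSRing S) {z : MonoidAlgebra ℤ G}
    (hz : z ∈ spanA S) {X : Finset G} (hX : X ∈ S) {x y : G} (hx : x ∈ X) (hy : y ∈ X) :
    z.coeff x = z.coeff y := by
  have : spanA S ≤ LinearMap.ker (((Finsupp.lapply x : (G →₀ ℤ) →ₗ[ℤ] ℤ) - Finsupp.lapply y) ∘ₗ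
      (MonoidAlgebra.coeffLinearEquiv ℤ).toLinearMap) := by
    rw [spanA, Submodule.span_le]
    rintro w ⟨Y, hY, rfl⟩
    simp only [SetLike.mem_coe, LinearMap.mem_ker, LinearMap.coe_comp, Function.comp_apply, LinearMap.sub_apply, Finsupp.lapply_apply,
      sub_eq_zero]
    show (ind Y).coeff x = (ind Y).coeff y
    rw [ind_apply, ind_apply]
    by_cases hxY : x ∈ Y
    · have : X = Y := by
        by_contra hne
        exact (Finset.disjoint_left.mp (hS.disj X hX Y hY hne) hx) hxY
      simp [hxY, this ▸ hy]
    · have hyY : y ∉ Y := by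
        intro hyY
        have : X = Y := by
          by_contra hne
          exact (Finset.disjoint_left.mp (hS.disj X hX Y hY hne) hy) hyY
        exact hxY (this ▸ hx)
      simp [hxY, hyY]
  have h2 := this hz
  simpa [sub_eq_zero] using h2

/-- `X` is a union of basic sets. -/
def UB (S : Finset (Finset G)) (X : Finset G) : Prop :=
  ∀ Y ∈ S, ∀ x ∈ Y, x ∈ X → Y ⊆ X

lemma UB_basic {S : Finset (Finset G)} (hS : IsSRing S) {X : Finset G} (hX : X ∈ S) :
    UB S X := by
  intro Y hY x hxY hxX z hz
  have : X = Y := by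
    by_contra hne
    exact (Finset.disjoint_left.mp (hS.disj X hX Y hY hne) hxX) hxY
  exact this ▸ hz

lemma UB.ind_eq_sum {S : Finset (Finset G)} (hS : IsSRing S) {X : Finset G} (h : UB S X) :
    ind X = ∑ Y ∈ S.filter (fun Y => Y ⊆ X), ind Y := by
  ext g
  rw [ind_apply, MonoidAlgebra.coeff_sum, Finset.sum_apply']
  by_cases hg : g ∈ X
  · obtain ⟨Y₀, hY₀S, hgY₀⟩ := hS.cover g
    have hY₀X : Y₀ ⊆ X := h Y₀ hY₀S g hgY₀ hg
    have hY₀mem : Y₀ ∈ S.filter (fun Y => Y ⊆ X) := Finset.mem_filter.mpr ⟨hY₀S, hY₀X⟩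
    rw [if_pos hg, Finset.sum_eq_single_of_mem Y₀ hY₀mem]
    · simp [ind_apply, hgY₀]
    · intro Y hY hne
      have hYS : Y ∈ S := (Finset.mem_filter.mp hY).1
      have : g ∉ Y := fun hgY =>
        (Finset.disjoint_left.mp (hS.disj Y hYS Y₀ hY₀S hne) hgY) hgY₀
      simp [ind_apply, this]
  · rw [if_neg hg, Finset.sum_eq_zero]
    intro Y hY
    have : g ∉ Y := fun hgY => hg ((Finset.mem_filter.mp hY).2 hgY)
    simp [ind_apply, this]

lemma UB.mem_spanA {S : Finset (Finset G)} (hS : IsSRing S) {X : Finset G} (h : UB S X) :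
    ind X ∈ spanA S := by
  rw [h.ind_eq_sum hS]
  exact Submodule.sum_mem _ fun Y hY =>
    Submodule.subset_span ⟨Y, (Finset.mem_filter.mp hY).1, rfl⟩

lemma pow_mem_spanA {S : Finset (Finset G)} (hS : IsSRing S) {z : MonoidAlgebra ℤ G}
    (hz : z ∈ spanA S) {p : ℕ} (hp : 1 ≤ p) : z ^ p ∈ spanA S := by
  induction p, hp using Nat.le_induction with
  | base => simpa using hz
  | succ k hk ih => rw [pow_succ]; exact hS.mul_closed _ ih _ hz

end Aux

section Aux2
variable {G : Type*} [CommGroup G]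

/-- Reduction mod `p` of the integral group algebra. -/
def phi (p : ℕ) : MonoidAlgebra ℤ G →+* MonoidAlgebra (ZMod p) G :=
  MonoidAlgebra.liftNCRingHom
    (MonoidAlgebra.singleOneRingHom.comp (Int.castRingHom (ZMod p)))
    (MonoidAlgebra.of (ZMod p) G) (fun _ _ => Commute.all _ _)

lemma phi_single (p : ℕ) (a : G) (b : ℤ) :
    phi p (MonoidAlgebra.single a b) = MonoidAlgebra.single a (b : ZMod p) := by
  rw [phi, MonoidAlgebra.liftNCRingHom]
  show MonoidAlgebra.liftNC _ _ _ = _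
  rw [MonoidAlgebra.liftNC_single]
  show MonoidAlgebra.single (1:G) ((b : ZMod p)) * MonoidAlgebra.single a (1 : ZMod p) = _
  rw [MonoidAlgebra.single_mul_single, one_mul, mul_one]

lemma phi_apply (p : ℕ) (z : MonoidAlgebra ℤ G) (g : G) :
    (phi p z).coeff g = ((z.coeff g : ℤ) : ZMod p) := by
  induction z using MonoidAlgebra.induction_linear with
  | zero => simp
  | add a b ha hb =>
    have : phi p (a + b) = phi p a + phi p b := map_add _ _ _
    rw [this]
    show (phi p a + phi p b).coeff g = _
    rw [MonoidAlgebra.coeff_add, Finsupp.add_apply]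
    show _ = (((a + b).coeff g : ℤ) : ZMod p)
    rw [MonoidAlgebra.coeff_add, Finsupp.add_apply, ha, hb, Int.cast_add]
  | single a b =>
    rw [phi_single]
    show Finsupp.single a ((b : ZMod p)) g = ((Finsupp.single a b g : ℤ) : ZMod p)
    rw [Finsupp.single_apply, Finsupp.single_apply, apply_ite (fun t : ℤ => (t : ZMod p))]
    simp

instance mypchar (p : ℕ) [Fact p.Prime] : CharP (MonoidAlgebra (ZMod p) G) p := by
  have hinj : Function.Injective (MonoidAlgebra.singleOneRingHom :
      ZMod p →+* MonoidAlgebra (ZMod p) G) := by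
    intro a b h
    have := congrArg (fun z : MonoidAlgebra (ZMod p) G => z.coeff 1) h
    simpa [MonoidAlgebra.singleOneRingHom_apply, MonoidAlgebra.single_apply] using this
  exact charP_of_injective_ringHom hinj p

end Aux2


section Aux3
variable {G : Type*} [CommGroup G] [DecidableEq G]

lemma UB_pow_prime {S : Finset (Finset G)} (hS : IsSRing S) {p : ℕ} (hp : p.Prime)
    (hinj : Function.Injective (fun x : G => x ^ p))
    {X : Finset G} (hX : UB S X) : UB S (X.image (· ^ p)) := by
  haveI : Fact p.Prime := ⟨hp⟩
  have hmem : ind X ^ p ∈ spanA S := pow_mem_spanA hS (hX.mem_spanA hS) hp.pos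
  have hphi : phi p (ind X ^ p)
      = ∑ y ∈ X.image (· ^ p), MonoidAlgebra.single y (1 : ZMod p) := by
    haveI : ExpChar (MonoidAlgebra (ZMod p) G) p := ExpChar.prime hp
    rw [map_pow, ind, map_sum]
    have h1 : ∀ x ∈ X, phi p (MonoidAlgebra.single x (1:ℤ))
        = MonoidAlgebra.single x (1 : ZMod p) := by
      intro x _
      rw [phi_single, Int.cast_one]
    rw [Finset.sum_congr rfl h1, sum_pow_char, Finset.sum_image (fun x _ y _ h => hinj h)]
    refine Finset.sum_congr rfl fun x _ => ?_
    rw [MonoidAlgebra.single_pow, one_pow]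
  have key : ∀ g : G, (((ind X ^ p).coeff g : ℤ) : ZMod p)
      = if g ∈ X.image (· ^ p) then 1 else 0 := by
    intro g
    rw [← phi_apply, hphi, MonoidAlgebra.coeff_sum, Finset.sum_apply']
    simp [MonoidAlgebra.coeff_single, Finsupp.single_apply, Finset.sum_ite_eq]
  intro Y hY x hxY hxI y hyY
  have hc : (ind X ^ p).coeff x = (ind X ^ p).coeff y := coeff_const hS hmem hY hxY hyY
  have e : (if x ∈ X.image (· ^ p) then (1 : ZMod p) else 0)
      = (if y ∈ X.image (· ^ p) then (1 : ZMod p) else 0) := by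
    rw [← key, ← key, hc]
  rw [if_pos hxI] at e
  by_contra hyI
  rw [if_neg hyI] at e
  exact one_ne_zero e

lemma UB_pow_coprime {S : Finset (Finset G)} (hS : IsSRing S)
    (hinj : ∀ q : ℕ, q.Prime → Nat.Coprime q 3 → Function.Injective (fun x : G => x ^ q)) :
    ∀ m : ℕ, Nat.Coprime m 3 → ∀ X : Finset G, UB S X → UB S (X.image (· ^ m)) := by
  intro m
  induction m using Nat.strong_induction_on with
  | _ m ih =>
    intro hm X hX
    rcases Nat.eq_zero_or_pos m with rfl | hmpos
    · simp [Nat.coprime_zero_left] at hm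
    rcases eq_or_ne m 1 with rfl | hm1
    · have himg : X.image (· ^ 1) = X := by
        simp
      rwa [himg]
    · have hqp : m.minFac.Prime := Nat.minFac_prime hm1
      have hqd : m.minFac ∣ m := Nat.minFac_dvd m
      have hdiv : m / m.minFac ∣ m := Nat.div_dvd_of_dvd hqd
      have hm' : Nat.Coprime (m / m.minFac) 3 := Nat.Coprime.coprime_dvd_left hdiv hm
      have hq3 : Nat.Coprime m.minFac 3 := Nat.Coprime.coprime_dvd_left hqd hm
      have hlt : m / m.minFac < m := Nat.div_lt_self hmpos hqp.one_lt
      have himg : X.image (· ^ m) = (X.image (· ^ (m / m.minFac))).image (· ^ m.minFac) := by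
        rw [Finset.image_image]
        apply Finset.image_congr
        intro x _
        show x ^ m = (x ^ (m / m.minFac)) ^ m.minFac
        rw [← pow_mul, Nat.div_mul_cancel hqd]
      rw [himg]
      exact UB_pow_prime hS hqp (hinj _ hqp hq3) (ih _ hlt hm' X hX)

end Aux3

section DgrpFacts

lemma dgrp_card (n : ℕ) : Fintype.card (Dgrp n) = 3 ^ (n + 1) := by
  rw [Fintype.card_prod, Fintype.card_multiplicative, Fintype.card_multiplicative,
    ZMod.card, ZMod.card, pow_succ]
  ring

lemma dgrp_inj (n : ℕ) {m : ℕ} (hm : Nat.Coprime m 3) :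
    Function.Injective (fun x : Dgrp n => x ^ m) := by
  intro x y h
  have hxy : x ^ m = y ^ m := h
  have h1 : (x * y⁻¹) ^ m = 1 := by
    rw [mul_pow, inv_pow, hxy, mul_inv_cancel]
  have h2 : orderOf (x * y⁻¹) ∣ m := orderOf_dvd_of_pow_eq_one h1
  have h3 : orderOf (x * y⁻¹) ∣ 3 ^ (n + 1) := dgrp_card n ▸ orderOf_dvd_card
  have h4 : orderOf (x * y⁻¹) ∣ Nat.gcd m (3 ^ (n + 1)) := Nat.dvd_gcd h2 h3
  rw [Nat.Coprime.gcd_eq_one (hm.pow_right (n + 1)), Nat.dvd_one, orderOf_eq_one_iff] at h4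
  rw [← mul_inv_eq_one]
  exact h4

/-- The two elements of order 3 in `ZMod (3^n)` (multiplicatively). -/
lemma order3_cases {n : ℕ} (hn : 1 ≤ n) {x y : Multiplicative (ZMod (3 ^ n))}
    (hx3 : x ^ 3 = 1) (hx1 : x ≠ 1) (hy3 : y ^ 3 = 1) (hy1 : y ≠ 1) :
    y = x ∨ y = x * x := by
  set w : ZMod (3 ^ n) := ((3 ^ (n - 1) : ℕ) : ZMod (3 ^ n)) with hw
  have h3w : w + (w + w) = 0 := by
    have : ((3 ^ (n - 1) + (3 ^ (n - 1) + 3 ^ (n - 1)) : ℕ) : ZMod (3 ^ n)) = 0 := by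
      rw [ZMod.natCast_eq_zero_iff]
      have : 3 ^ (n-1) + (3 ^ (n-1) + 3 ^ (n-1)) = 3 ^ (n-1) * 3 := by ring
      rw [this, ← pow_succ]
      have : n - 1 + 1 = n := by omega
      rw [this]
    rw [hw, ← this]
    push_cast
    ring
  have key : ∀ z : Multiplicative (ZMod (3 ^ n)), z ^ 3 = 1 → z ≠ 1 →
      z.toAdd = w ∨ z.toAdd = w + w := by
    intro z hz3 hz1
    have h0 : (3 : ℕ) • z.toAdd = 0 := by
      rw [← toAdd_pow, hz3, toAdd_one]
    have h0' : ((3 * (z.toAdd).val : ℕ) : ZMod (3 ^ n)) = 0 := by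
      push_cast
      rw [ZMod.natCast_rightInverse (z.toAdd)]
      rw [nsmul_eq_mul] at h0
      push_cast at h0
      exact h0
    rw [ZMod.natCast_eq_zero_iff] at h0'
    have hn' : 3 ^ n = 3 * 3 ^ (n - 1) := by
      rw [← pow_succ']
      congr 1
      omega
    obtain ⟨t, ht⟩ := h0'
    have hval : (z.toAdd).val = 3 ^ (n - 1) * t := by
      have h3 : (0:ℕ) < 3 := by norm_num
      apply Nat.eq_of_mul_eq_mul_left h3
      rw [ht, hn']
      ring
    have hvlt : (z.toAdd).val < 3 ^ n := ZMod.val_lt _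
    have ht3 : t < 3 := by
      by_contra hge
      push_neg at hge
      have : 3 ^ n ≤ (z.toAdd).val := by
        rw [hval, hn']
        calc 3 * 3 ^ (n-1) ≤ 3 ^ (n-1) * t := by nlinarith [pow_pos (by norm_num : (0:ℕ) < 3) (n-1)]
          _ = 3 ^ (n-1) * t := rfl
      omega
    have hzv : z.toAdd = ((3 ^ (n - 1) * t : ℕ) : ZMod (3 ^ n)) := by
      rw [← hval, ZMod.natCast_rightInverse (z.toAdd)]
    interval_cases t
    · exfalso
      apply hz1
      have : z.toAdd = 0 := by rw [hzv]; simp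
      have := congrArg Multiplicative.ofAdd this
      simpa using this
    · left
      rw [hzv, hw]
      norm_num
    · right
      rw [hzv, hw]
      push_cast
      ring
  have hxw := key x hx3 hx1
  have hyw := key y hy3 hy1
  have hxx : (x * x).toAdd = x.toAdd + x.toAdd := rfl
  have toAdd_inj : ∀ u v : Multiplicative (ZMod (3 ^ n)), u.toAdd = v.toAdd → u = v :=
    fun u v h => h
  rcases hxw with hx | hx <;> rcases hyw with hy | hy
  · left; exact toAdd_inj _ _ (by rw [hx, hy])
  · right; exact toAdd_inj _ _ (by rw [hy, hxx, hx])
  · right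
    apply toAdd_inj
    rw [hy, hxx, hx]
    have : w + w + (w + w) = w + (w + (w + w)) := by ring
    rw [this, h3w, add_zero]
  · left; exact toAdd_inj _ _ (by rw [hx, hy])

end DgrpFacts

end

/-- if a basic set `T` of an S-ring over `D = ℤ₃ × ℤ_{3^n}`
contains elements `a`, `b` with `|a| > |b| ≥ 3`, then `a`, `a·c₁`, `a·c₁²`
all belong to `T`, where `c₁` has order 3 in the cyclic factor `C`. -/
theorem stmt8 (n : ℕ) (hn : 2 ≤ n) (S : Finset (Finset (Dgrp n)))
    (hS : IsSRing S) (c₁ : Multiplicative (ZMod (3 ^ n))) (hc₁ : orderOf c₁ = 3)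
    (T : Finset (Dgrp n)) (hT : T ∈ S) (a b : Dgrp n) (ha : a ∈ T) (hb : b ∈ T)
    (hab : orderOf b < orderOf a) (hb3 : 3 ≤ orderOf b) :
    a ∈ T ∧ a * (1, c₁) ∈ T ∧ a * (1, c₁) ^ 2 ∈ T := by
  have hcard := dgrp_card n
  have hdvd_a : orderOf a ∣ 3 ^ (n + 1) := hcard ▸ orderOf_dvd_card
  obtain ⟨k, hkle, hk⟩ := (Nat.dvd_prime_pow Nat.prime_three).mp hdvd_a
  have hdvd_b : orderOf b ∣ 3 ^ (n + 1) := hcard ▸ orderOf_dvd_card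
  obtain ⟨j, hjle, hj⟩ := (Nat.dvd_prime_pow Nat.prime_three).mp hdvd_b
  have hk2 : 2 ≤ k := by
    by_contra hcon
    push_neg at hcon
    interval_cases k <;> rw [hk] at hab <;> omega
  have hjk : j < k := by
    rw [hk, hj] at hab
    exact (Nat.pow_lt_pow_iff_right (by norm_num : 1 < 3)).mp hab
  have hb_pow : b ^ 3 ^ (k - 1) = 1 :=
    orderOf_dvd_iff_pow_eq_one.mp (by rw [hj]; exact pow_dvd_pow 3 (by omega))
  have hbm : ∀ u : ℕ, b ^ (1 + 3 ^ (k - 1) * u) = b := by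
    intro u
    rw [pow_add, pow_mul, hb_pow, one_pow, pow_one, mul_one]
  have hprodpow : ∀ (p : Dgrp n) (N : ℕ), p ^ N = (p.1 ^ N, p.2 ^ N) := by
    intro p N
    induction N with
    | zero => simp [Prod.ext_iff]
    | succ N ihN => rw [pow_succ, ihN, pow_succ, pow_succ, Prod.mk_mul_mk]
  have ha1 : a.1 ^ 3 ^ (k - 1) = 1 := by
    apply orderOf_dvd_iff_pow_eq_one.mp
    have h1 : orderOf a.1 ∣ Fintype.card (Multiplicative (ZMod 3)) := orderOf_dvd_card
    have h2 : orderOf a.1 ∣ 3 := by simpa [ZMod.card] using h1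
    exact dvd_trans h2 (dvd_pow_self 3 (by omega))
  set e : Multiplicative (ZMod (3 ^ n)) := a.2 ^ 3 ^ (k - 1) with he
  have hd_eq : a ^ 3 ^ (k - 1) = ((1 : Multiplicative (ZMod 3)), e) := by
    rw [hprodpow, ha1]
  have hdo : orderOf (a ^ 3 ^ (k - 1)) = 3 := by
    rw [orderOf_pow' a (by positivity : 3 ^ (k - 1) ≠ 0), hk, Nat.gcd_comm,
      Nat.gcd_eq_left (pow_dvd_pow 3 (by omega : k - 1 ≤ k)),
      Nat.pow_div (by omega) (by norm_num)]
    have hk1 : k - (k - 1) = 1 := by omega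
    rw [hk1, pow_one]
  have hee3 : e ^ 3 = 1 := by
    have h1 : ((1 : Multiplicative (ZMod 3)), e) ^ 3 = 1 := by
      have h0 := pow_orderOf_eq_one (a ^ 3 ^ (k - 1))
      rw [hdo, hd_eq] at h0
      exact h0
    have := congrArg Prod.snd h1
    simpa [hprodpow] using this
  have hee1 : e ≠ 1 := by
    intro hcon
    rw [hcon] at hd_eq
    have : orderOf (a ^ 3 ^ (k - 1)) = 1 := by
      rw [hd_eq]
      exact orderOf_one
    omega
  have hc3 : c₁ ^ 3 = 1 := by
    have h0 := pow_orderOf_eq_one c₁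
    rwa [hc₁] at h0
  have hc1ne : c₁ ≠ 1 := by
    intro hcon
    rw [hcon, orderOf_one] at hc₁
    omega
  have hcase := order3_cases (by omega : 1 ≤ n) hc3 hc1ne hee3 hee1
  have hUBT : UB S T := UB_basic hS hT
  have hcop : ∀ u : ℕ, Nat.Coprime (1 + 3 ^ (k - 1) * u) 3 := by
    intro u
    have h3 : (3 : ℕ) ∣ 3 ^ (k - 1) * u := Dvd.dvd.mul_right (dvd_pow_self 3 (by omega)) u
    rw [Nat.coprime_comm, Nat.Prime.coprime_iff_not_dvd Nat.prime_three]
    intro hdvd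
    obtain ⟨c, hc⟩ := h3
    omega
  have main : ∀ u : ℕ, a ^ (1 + 3 ^ (k - 1) * u) ∈ T := by
    intro u
    have hu := hcop u
    have hUBM := UB_pow_coprime hS (fun q _ hq3 => dgrp_inj n hq3)
      (1 + 3 ^ (k - 1) * u) hu T hUBT
    have hbM : b ∈ T.image (· ^ (1 + 3 ^ (k - 1) * u)) :=
      Finset.mem_image.mpr ⟨b, hb, hbm u⟩
    have hsub : T ⊆ T.image (· ^ (1 + 3 ^ (k - 1) * u)) := hUBM T hT b hb hbM
    have hcardeq : (T.image (· ^ (1 + 3 ^ (k - 1) * u))).card = T.card :=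
      Finset.card_image_of_injective T (dgrp_inj n hu)
    have hTeq : T = T.image (· ^ (1 + 3 ^ (k - 1) * u)) :=
      Finset.eq_of_subset_of_card_le hsub (le_of_eq hcardeq)
    rw [hTeq]
    exact Finset.mem_image.mpr ⟨a, ha, rfl⟩
  have hapow : ∀ u : ℕ, a ^ (1 + 3 ^ (k - 1) * u)
      = a * ((1 : Multiplicative (ZMod 3)), e) ^ u := by
    intro u
    rw [pow_add, pow_one, pow_mul, hd_eq]
  have hm1 : a * ((1 : Multiplicative (ZMod 3)), e) ∈ T := by
    have := main 1
    rwa [hapow 1, pow_one] at this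
  have hm2 : a * ((1 : Multiplicative (ZMod 3)), e) ^ 2 ∈ T := by
    have := main 2
    rwa [hapow 2] at this
  refine ⟨ha, ?_, ?_⟩
  · rcases hcase with hcase | hcase
    · rw [show ((1 : Multiplicative (ZMod 3)), c₁) = ((1 : Multiplicative (ZMod 3)), e) from by
        rw [hcase]]
      exact hm1
    · have hsq : ((1 : Multiplicative (ZMod 3)), e) ^ 2
          = ((1 : Multiplicative (ZMod 3)), c₁) := by
        rw [hprodpow]
        simp only [one_pow]
        rw [hcase]
        congr 1
        have h4 : (c₁ * c₁) ^ 2 = c₁ ^ 3 * c₁ := by rw [mul_pow, ← pow_add, ← pow_succ]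
        rw [h4, hc3, one_mul]
      rw [← hsq]
      exact hm2
  · rcases hcase with hcase | hcase
    · rw [show ((1 : Multiplicative (ZMod 3)), c₁) = ((1 : Multiplicative (ZMod 3)), e) from by
        rw [hcase]]
      exact hm2
    · have hsq2 : ((1 : Multiplicative (ZMod 3)), c₁) ^ 2
          = ((1 : Multiplicative (ZMod 3)), e) := by
        rw [hprodpow]
        simp only [one_pow]
        rw [hcase, sq]
      rw [hsq2]
      exact hm1
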